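/- For every natural number M and every nonzero real number q, one has ∑_{k=0}^{M} [2k+1]_q · ( C(2M, M−k) − C(2M, M−k−1) ) = (q + q⁻¹)^{2M}, where [2k+1]_q := ∑_{j=0}^{2k} q^{2j−2k}, C(n,r) denotes the binomial coefficient, and by convention C(2M, M−k−1) = 0 when k = M. -/

import Mathlib

open Finset

private lemma tele_aux (M i : ℕ) (hi : i ≤ 2 * M) :
    ∑ k ∈ Finset.range (M + 1),
      (if M ≤ i + k ∧ i ≤ M + k then
        ((Nat.choose (2 * M) (M - k) : ℝ) -
          (if k = M then 0 else (Nat.choose (2 * M) (M - k - 1) : ℝ)))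
      else 0) = (Nat.choose (2 * M) i : ℝ) := by
  set t := max (M - i) (i - M) with ht
  have htM : t ≤ M := by omega
  set A : ℕ → ℝ := fun k => if k ≤ M then (Nat.choose (2 * M) (M - k) : ℝ) else 0 with hA
  have h1 : ∀ k ∈ Finset.range (M + 1),
      (if M ≤ i + k ∧ i ≤ M + k then
        ((Nat.choose (2 * M) (M - k) : ℝ) -
          (if k = M then 0 else (Nat.choose (2 * M) (M - k - 1) : ℝ)))
      else 0) = (if t ≤ k then A k - A (k + 1) else 0) := by
    intro k hk
    simp only [Finset.mem_range] at hk
    have hcond : (M ≤ i + k ∧ i ≤ M + k) ↔ t ≤ k := by omega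
    by_cases h : t ≤ k
    · rw [if_pos (hcond.mpr h), if_pos h]
      have hkM : k ≤ M := by omega
      by_cases hkm : k = M
      · subst hkm; simp [hA]
      · have hk1 : k + 1 ≤ M := by omega
        have hsub : M - (k + 1) = M - k - 1 := by omega
        simp [hA, hkM, hk1, hkm, hsub]
    · rw [if_neg (fun hc => h (hcond.mp hc)), if_neg h]
  rw [Finset.sum_congr rfl h1, ← Finset.sum_filter]
  have hf : (Finset.range (M + 1)).filter (fun k => t ≤ k) = Finset.Ico t (M + 1) := by
    ext x; simp [Finset.mem_filter, Finset.mem_Ico]; omega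
  rw [hf, Finset.sum_Ico_eq_sum_range]
  simp only [add_assoc]
  rw [Finset.sum_range_sub' (fun k => A (t + k))]
  have h2 : t + (M + 1 - t) = M + 1 := by omega
  rw [h2]
  have hA1 : A (M + 1) = 0 := by simp [hA]
  rw [hA1, sub_zero, add_zero]
  rcases le_or_gt i M with h | h
  · have h3 : M - t = i := by omega
    simp [hA, htM, h3]
  · have h3 : M - t = 2 * M - i := by omega
    simp [hA, htM, h3, Nat.choose_symm hi]

private lemma Sk_aux (M k : ℕ) (hk : k ≤ M) (q : ℝ) :
    ∑ i ∈ Finset.range (2 * M + 1),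
      (if M ≤ i + k ∧ i ≤ M + k then q ^ (2 * (i : ℤ) - 2 * (M : ℤ)) else 0)
    = ∑ j ∈ Finset.range (2 * k + 1), q ^ (2 * (j : ℤ) - 2 * (k : ℤ)) := by
  rw [← Finset.sum_filter]
  have hf : (Finset.range (2 * M + 1)).filter (fun i => M ≤ i + k ∧ i ≤ M + k)
      = Finset.Ico (M - k) (M + k + 1) := by
    ext x; simp [Finset.mem_filter, Finset.mem_Ico]; omega
  rw [hf, Finset.sum_Ico_eq_sum_range]
  have hn : M + k + 1 - (M - k) = 2 * k + 1 := by omega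
  rw [hn]
  refine Finset.sum_congr rfl fun j hj => ?_
  congr 1
  omega

private lemma rhs_aux (M : ℕ) (q : ℝ) (hq : q ≠ 0) :
    (q + q⁻¹) ^ (2 * M)
    = ∑ i ∈ Finset.range (2 * M + 1),
        q ^ (2 * (i : ℤ) - 2 * (M : ℤ)) * (Nat.choose (2 * M) i : ℝ) := by
  rw [add_pow]
  refine Finset.sum_congr rfl fun i hi => ?_
  simp only [Finset.mem_range] at hi
  congr 1
  rw [← zpow_natCast q i, ← zpow_natCast q⁻¹ (2 * M - i), inv_zpow, ← zpow_neg,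
    ← zpow_add₀ hq]
  congr 1
  omega

/-- For every natural number `M` and every nonzero real `q`,
`∑_{k=0}^{M} [2k+1]_q · (C(2M, M−k) − C(2M, M−k−1)) = (q + q⁻¹)^(2M)`,
where `[2k+1]_q = ∑_{j=0}^{2k} q^(2j−2k)` and by convention the second
binomial coefficient is `0` when `k = M`. -/
theorem stmt0 (M : ℕ) (q : ℝ) (hq : q ≠ 0) :
    ∑ k ∈ Finset.range (M + 1),
      (∑ j ∈ Finset.range (2 * k + 1), q ^ (2 * (j : ℤ) - 2 * (k : ℤ))) *
        ((Nat.choose (2 * M) (M - k) : ℝ) -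
          (if k = M then 0 else (Nat.choose (2 * M) (M - k - 1) : ℝ)))
      = (q + q⁻¹) ^ (2 * M) := by
  rw [rhs_aux M q hq]
  have step : ∀ k ∈ Finset.range (M + 1),
      (∑ j ∈ Finset.range (2 * k + 1), q ^ (2 * (j : ℤ) - 2 * (k : ℤ))) *
        ((Nat.choose (2 * M) (M - k) : ℝ) -
          (if k = M then 0 else (Nat.choose (2 * M) (M - k - 1) : ℝ)))
      = ∑ i ∈ Finset.range (2 * M + 1),
          q ^ (2 * (i : ℤ) - 2 * (M : ℤ)) *
            (if M ≤ i + k ∧ i ≤ M + k then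
              ((Nat.choose (2 * M) (M - k) : ℝ) -
                (if k = M then 0 else (Nat.choose (2 * M) (M - k - 1) : ℝ)))
            else 0) := by
    intro k hk
    simp only [Finset.mem_range] at hk
    rw [← Sk_aux M k (by omega) q, Finset.sum_mul]
    refine Finset.sum_congr rfl fun i _ => ?_
    split <;> simp
  rw [Finset.sum_congr rfl step, Finset.sum_comm]
  refine Finset.sum_congr rfl fun i hi => ?_
  simp only [Finset.mem_range] at hi
  rw [← Finset.mul_sum, tele_aux M i (by omega)]
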